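/- arXiv:1408.2597 — 5 statements merged into one kernel-verified Lean document; each statement's English description precedes it below -/
import Mathlib

section
/- Let {A_k}_{k≥1} be a nonnegative real sequence with A_{k+1} ≤ (1 - a/k) A_k + b/k² for all k ≥ 1, where a > 1 and b > 0. Then A_k ≤ (2b/(a-1)) / k for all k ≥ ⌊a⌋ + 1. -/
theorem stmt_2 (A : ℕ → ℝ) (a b : ℝ) (ha : 1 < a) (hb : 0 < b)
    (hA : ∀ k : ℕ, 1 ≤ k → 0 ≤ A k)
    (hrec : ∀ k : ℕ, 1 ≤ k → A (k + 1) ≤ (1 - a / (k : ℝ)) * A k + b / (k : ℝ) ^ 2) :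
    ∀ k : ℕ, Nat.floor a + 1 ≤ k → A k ≤ (2 * b / (a - 1)) / (k : ℝ) := by
  have ha0 : (0:ℝ) ≤ a := by linarith
  have ha1 : (0:ℝ) < a - 1 := by linarith
  set f := Nat.floor a with hfdef
  have hf1 : 1 ≤ f := Nat.le_floor (by push_cast; linarith)
  have hfa : (f:ℝ) ≤ a := Nat.floor_le ha0
  have haf : a < (f:ℝ) + 1 := Nat.lt_floor_add_one a
  have hfpos : (0:ℝ) < (f:ℝ) := by exact_mod_cast hf1
  intro k hk
  induction k, hk using Nat.le_induction with
  | base =>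
    have h := hrec f hf1
    have h1 : 1 - a / (f:ℝ) ≤ 0 := by
      rw [sub_nonpos, le_div_iff₀ hfpos]; linarith
    have h2 : (1 - a / (f:ℝ)) * A f ≤ 0 :=
      mul_nonpos_of_nonpos_of_nonneg h1 (hA f hf1)
    have h3 : A (f + 1) ≤ b / (f:ℝ)^2 := by linarith
    have key : b / (f:ℝ)^2 ≤ (2 * b / (a - 1)) / ((f:ℝ) + 1) := by
      rw [div_le_div_iff₀ (by positivity) (by positivity), div_mul_eq_mul_div,
        le_div_iff₀ ha1]
      have e1 : b * ((f:ℝ) + 1) * (a - 1) ≤ b * ((f:ℝ) + 1) * (f:ℝ) :=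
        mul_le_mul_of_nonneg_left (by linarith) (by positivity)
      have hf1' : (1:ℝ) ≤ (f:ℝ) := by exact_mod_cast hf1
      have e2 : b * ((f:ℝ) + 1) * (f:ℝ) ≤ 2 * b * (f:ℝ)^2 := by
        nlinarith [mul_nonneg (mul_nonneg hb.le hfpos.le) (show (0:ℝ) ≤ (f:ℝ) - 1 by linarith)]
      linarith
    push_cast
    linarith
  | succ k hk ih =>
    have hk1 : 1 ≤ k := le_trans (Nat.le_add_left 1 f) hk
    have hkf : (f:ℝ) + 1 ≤ (k:ℝ) := by exact_mod_cast hk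
    have hkpos : (0:ℝ) < (k:ℝ) := by linarith
    have hka : a < (k:ℝ) := by linarith
    have hcoef : 0 ≤ 1 - a / (k:ℝ) := by
      rw [sub_nonneg, div_le_one hkpos]; linarith
    have step := mul_le_mul_of_nonneg_left ih hcoef
    have h := hrec k hk1
    have key : (1 - a / (k:ℝ)) * ((2 * b / (a - 1)) / (k:ℝ)) + b / (k:ℝ)^2
        ≤ (2 * b / (a - 1)) / ((k:ℝ) + 1) := by
      have hC : 0 < 2 * b / (a - 1) := by positivity
      have hCa : (2 * b / (a - 1)) * (a - 1) = 2 * b := by field_simp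
      rw [show (1 - a / (k:ℝ)) * (2 * b / (a - 1) / (k:ℝ)) + b / (k:ℝ)^2
          = (((k:ℝ) - a) * (2 * b / (a - 1)) + b) / (k:ℝ)^2 from by
        field_simp]
      rw [div_le_div_iff₀ (by positivity) (by positivity)]
      nlinarith [mul_pos hC (show (0:ℝ) < a by linarith), hCa,
        mul_nonneg hb.le (show (0:ℝ) ≤ (k:ℝ) - 1 by linarith),
        mul_pos hC hkpos]
    push_cast
    linarith
end

section
/- Let {a_k} and {b_k} be nonnegative real sequences such that ∑_{k=1}^∞ a_k = +∞, ∑_{k=1}^∞ a_k b_k < +∞, and there exists B > 0 with |b_{k+1} − b_k| ≤ B a_k for all k. Then lim_{k→∞} b_k = 0. -/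
open Filter Finset

theorem stmt_4 (a b : ℕ → ℝ) (B : ℝ) (hB : 0 < B)
    (ha : ∀ k, 0 ≤ a k) (hb : ∀ k, 0 ≤ b k)
    (hdiv : Tendsto (fun n => ∑ k ∈ Finset.range n, a k) atTop atTop)
    (hsum : Summable (fun k => a k * b k))
    (hdiff : ∀ k, |b (k + 1) - b k| ≤ B * a k) :
    Tendsto b atTop (nhds 0) := by
  classical
  rw [Metric.tendsto_atTop]
  intro ε hε
  set δ := ε ^ 2 / (4 * B) with hδdef
  have hδ : 0 < δ := by positivity
  set L := ∑' k, a k * b k with hL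
  have hSle : ∀ n, ∑ k ∈ range n, a k * b k ≤ L := fun n =>
    Summable.sum_le_tsum (range n) (fun k _ => mul_nonneg (ha k) (hb k)) hsum
  have htend : Tendsto (fun n => ∑ k ∈ range n, a k * b k) atTop (nhds L) :=
    hsum.hasSum.tendsto_sum_nat
  obtain ⟨N, hN⟩ := (htend.eventually (eventually_gt_nhds (by linarith : L - δ < L))).exists
  refine ⟨N, fun m hm => ?_⟩
  rw [Real.dist_eq, sub_zero, abs_of_nonneg (hb m)]
  by_contra hcon
  push_neg at hcon
  -- hcon : ε ≤ b m
  have h2B : (0:ℝ) < ε / (2 * B) := by positivity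
  have hex : ∃ n, ε / (2 * B) ≤ ∑ k ∈ Ico m n, a k := by
    obtain ⟨n, hn1, hn2⟩ :=
      ((hdiv.eventually_ge_atTop (ε / (2 * B) + ∑ k ∈ range m, a k)).and
        (eventually_ge_atTop m)).exists
    exact ⟨n, by rw [Finset.sum_Ico_eq_sub _ hn2]; linarith⟩
  set n := Nat.find hex with hn
  have hPn : ε / (2 * B) ≤ ∑ k ∈ Ico m n, a k := Nat.find_spec hex
  have hmin : ∀ j < n, ∑ k ∈ Ico m j, a k < ε / (2 * B) := fun j hj =>
    lt_of_not_ge (Nat.find_min hex hj)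
  have hmn : m ≤ n := by
    by_contra h
    push_neg at h
    rw [Ico_eq_empty (by omega), sum_empty] at hPn
    linarith
  -- drift bound
  have key : ∀ j, m ≤ j → b m - B * ∑ k ∈ Ico m j, a k ≤ b j := by
    intro j hj
    induction j, hj using Nat.le_induction with
    | base => simp
    | succ j hj ih =>
      rw [Finset.sum_Ico_succ_top hj]
      have h1 := hdiff j
      have h2 : b j - b (j + 1) ≤ |b (j + 1) - b j| := by
        rw [abs_sub_comm]; exact le_abs_self _
      linarith
  have hhalf : ∀ j ∈ Ico m n, ε / 2 ≤ b j := by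
    intro j hj
    rw [mem_Ico] at hj
    have hs := hmin j hj.2
    have h3 : B * (∑ k ∈ Ico m j, a k) < B * (ε / (2 * B)) :=
      mul_lt_mul_of_pos_left hs hB
    have h4 : B * (ε / (2 * B)) = ε / 2 := by field_simp
    have := key j hj.1
    linarith
  have hlow : ε / 2 * (ε / (2 * B)) ≤ ∑ k ∈ Ico m n, a k * b k := by
    calc ε / 2 * (ε / (2 * B)) ≤ ε / 2 * ∑ k ∈ Ico m n, a k := by
          apply mul_le_mul_of_nonneg_left hPn (by positivity)
      _ = ∑ k ∈ Ico m n, ε / 2 * a k := by rw [mul_sum]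
      _ ≤ ∑ k ∈ Ico m n, a k * b k := by
          refine sum_le_sum fun k hk => ?_
          rw [mul_comm (a k) (b k)]
          exact mul_le_mul_of_nonneg_right (hhalf k hk) (ha k)
  have heq : ε / 2 * (ε / (2 * B)) = δ := by rw [hδdef]; field_simp; ring
  have hSm : ∑ k ∈ range N, a k * b k ≤ ∑ k ∈ range m, a k * b k :=
    sum_le_sum_of_subset_of_nonneg (range_subset_range.2 hm)
      (fun k _ _ => mul_nonneg (ha k) (hb k))
  have hup : ∑ k ∈ Ico m n, a k * b k < δ := by
    rw [Finset.sum_Ico_eq_sub _ hmn]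
    have := hSle n
    linarith
  linarith
end

section
/- Let η ∈ (0,1), ε > 0, and let {σ_k²} be a nonnegative sequence. Set e_k = max{σ_k², (η+ε)^k} and μ_k = ∑_{j=1}^k η^{k−j} σ_j². Suppose there exists K such that e_{k+1}/e_k ≥ η + ε/2 for all k ≥ K. Then there is a constant B > 0 with μ_k ≤ B e_k for all k; in particular μ_k = O(e_k). -/
theorem stmt_15 (η ε : ℝ) (hη : 0 < η ∧ η < 1) (hε : 0 < ε)
    (σsq : ℕ → ℝ) (hσ : ∀ k, 0 ≤ σsq k)
    (e μ : ℕ → ℝ)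
    (he : ∀ k, e k = max (σsq k) ((η + ε) ^ k))
    (hμ : ∀ k, μ k = ∑ j ∈ Finset.Icc 1 k, η ^ (k - j) * σsq j)
    (K : ℕ) (hK : ∀ k, K ≤ k → η + ε / 2 ≤ e (k + 1) / e k) :
    ∃ B : ℝ, 0 < B ∧ ∀ k, 1 ≤ k → μ k ≤ B * e k := by
  obtain ⟨hη0, hη1⟩ := hη
  have hepos : ∀ k, 0 < e k := by
    intro k
    rw [he k]
    exact lt_of_lt_of_le (pow_pos (by linarith) k) (le_max_right _ _)
  have hμnn : ∀ k, 0 ≤ μ k := by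
    intro k
    rw [hμ k]
    exact Finset.sum_nonneg fun j _ => mul_nonneg (pow_nonneg hη0.le _) (hσ j)
  have hrec : ∀ k, μ (k + 1) = η * μ k + σsq (k + 1) := by
    intro k
    rw [hμ (k + 1), hμ k, Finset.sum_Icc_succ_top (by omega : 1 ≤ k + 1)]
    have : ∑ j ∈ Finset.Icc 1 k, η ^ (k + 1 - j) * σsq j
        = η * ∑ j ∈ Finset.Icc 1 k, η ^ (k - j) * σsq j := by
      rw [Finset.mul_sum]
      apply Finset.sum_congr rfl
      intro j hj
      have hjk : j ≤ k := (Finset.mem_Icc.mp hj).2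
      have : k + 1 - j = (k - j) + 1 := by omega
      rw [this, pow_succ]
      ring
    rw [this]
    simp
  obtain ⟨B, hB⟩ : ∃ B : ℝ, B = (2 * η + ε) / ε + ∑ j ∈ Finset.Icc 1 K, μ j / e j :=
    ⟨_, rfl⟩
  have hsumnn : 0 ≤ ∑ j ∈ Finset.Icc 1 K, μ j / e j :=
    Finset.sum_nonneg fun j _ => div_nonneg (hμnn j) (hepos j).le
  have hB0 : (2 * η + ε) / ε ≤ B := by simp [hB]; linarith
  have hB1 : 1 ≤ B := le_trans (by rw [le_div_iff₀ hε]; linarith) hB0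
  have hεB : 2 * η + ε ≤ ε * B := by
    have := (div_le_iff₀ hε).mp hB0
    linarith
  have hBK : ∀ j, 1 ≤ j → j ≤ K → μ j ≤ B * e j := by
    intro j h1 h2
    have hmem : j ∈ Finset.Icc 1 K := Finset.mem_Icc.mpr ⟨h1, h2⟩
    have : μ j / e j ≤ B := by
      have h := Finset.single_le_sum (fun i _ => div_nonneg (hμnn i) (hepos i).le) hmem
      have h0 : 0 ≤ (2 * η + ε) / ε := div_nonneg (by linarith) hε.le
      rw [hB]; linarith
    calc μ j = (μ j / e j) * e j := by
          rw [div_mul_cancel₀ _ (hepos j).ne']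
    _ ≤ B * e j := mul_le_mul_of_nonneg_right this (hepos j).le
  have main : ∀ k, μ k ≤ B * e k := by
    intro k
    induction k with
    | zero =>
      rw [hμ 0]
      simp
      exact mul_nonneg (by linarith) (hepos 0).le
    | succ k ih =>
      by_cases hk : K ≤ k
      · have h1 : (η + ε / 2) * e k ≤ e (k + 1) :=
          (le_div_iff₀ (hepos k)).mp (hK k hk)
        have hσe : σsq (k + 1) ≤ e (k + 1) := by rw [he (k + 1)]; exact le_max_left _ _
        have h2 : η * μ k ≤ η * (B * e k) := mul_le_mul_of_nonneg_left ih hη0.le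
        have h3 : (B - 1) * ((η + ε / 2) * e k) ≤ (B - 1) * e (k + 1) :=
          mul_le_mul_of_nonneg_left h1 (by linarith)
        have h4 : 0 ≤ ((B - 1) * (η + ε / 2) - η * B) * e k :=
          mul_nonneg (by nlinarith) (hepos k).le
        rw [hrec k]
        nlinarith [hepos (k + 1)]
      · exact hBK (k + 1) (by omega) (by omega)
  exact ⟨B, by linarith, fun k _ => main k⟩
end

section
/- Let F : ℝⁿ → ℝ be differentiable with L-Lipschitz gradient and let r : ℝⁿ → ℝ be convex. For any x, g ∈ ℝⁿ and 0 < α < 1/L, let x⁺ = prox_{αr}(x − αg) and δ = g − ∇F(x). Then F(x⁺) + r(x⁺) − F(x) − r(x) ≤ −⟨δ, x⁺ − x⟩ − (1/α − L/2)‖x⁺ − x‖² ≤ (α/(1 − Lα))‖δ‖² − (1/2)(1/(2α) − L/2)‖x⁺ − x‖². -/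
open InnerProductSpace Set Filter Topology

/-- Descent lemma: quadratic upper bound for a function with Lipschitz gradient. -/
lemma descent_lemma {n : ℕ} (F : EuclideanSpace ℝ (Fin n) → ℝ)
    (G : EuclideanSpace ℝ (Fin n) → EuclideanSpace ℝ (Fin n))
    (hG : ∀ x, HasGradientAt F (G x) x) (L : ℝ)
    (hlip : ∀ x y, ‖G x - G y‖ ≤ L * ‖x - y‖) (a b : EuclideanSpace ℝ (Fin n)) :
    F b ≤ F a + (inner ℝ (G a) (b - a) : ℝ) + L / 2 * ‖b - a‖ ^ 2 := by
  set d := b - a with hd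
  set c : ℝ := inner ℝ (G a) d with hc
  set K : ℝ := L / 2 * ‖d‖ ^ 2 with hK
  set φ : ℝ → ℝ := fun t => F (a + t • d) - t * c - t ^ 2 * K with hφ
  have hderiv : ∀ t : ℝ,
      HasDerivAt φ ((inner ℝ (G (a + t • d)) d : ℝ) - c - 2 * t * K) t := by
    intro t
    have hγ : HasDerivAt (fun t : ℝ => a + t • d) d t := by
      simpa using ((hasDerivAt_id t).smul_const d).const_add a
    have h1 : HasDerivAt (fun t : ℝ => F (a + t • d))
        ((inner ℝ (G (a + t • d)) d : ℝ)) t := by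
      have := ((hG (a + t • d)).hasFDerivAt).comp_hasDerivAt t hγ
      simp only [toDual_apply_apply] at this
      exact this
    have h2 : HasDerivAt (fun t : ℝ => t * c) c t := hasDerivAt_mul_const c
    have h3 : HasDerivAt (fun t : ℝ => t ^ 2 * K) (2 * t * K) t := by
      simpa [mul_comm] using (hasDerivAt_pow 2 t).mul_const K
    exact (h1.sub h2).sub h3
  have hanti : AntitoneOn φ (Icc (0:ℝ) 1) := by
    apply antitoneOn_of_hasDerivWithinAt_nonpos (convex_Icc 0 1)
      (fun t _ => (hderiv t).continuousAt.continuousWithinAt)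
      (fun t ht => (hderiv t).hasDerivWithinAt)
    intro t ht
    rw [interior_Icc] at ht
    have ht0 : 0 < t := ht.1
    have hinner : (inner ℝ (G (a + t • d)) d : ℝ) - c ≤ L * t * ‖d‖ ^ 2 := by
      have h1 : (inner ℝ (G (a + t • d)) d : ℝ) - c = inner ℝ (G (a + t • d) - G a) d := by
        rw [hc, inner_sub_left]
      rw [h1]
      calc (inner ℝ (G (a + t • d) - G a) d : ℝ) ≤ ‖G (a + t • d) - G a‖ * ‖d‖ :=
            real_inner_le_norm _ _
        _ ≤ L * ‖(a + t • d) - a‖ * ‖d‖ := by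
            have := hlip (a + t • d) a
            have hdn : (0:ℝ) ≤ ‖d‖ := norm_nonneg _
            nlinarith [real_inner_le_norm (G (a + t • d) - G a) d]
        _ = L * t * ‖d‖ ^ 2 := by
            rw [add_sub_cancel_left, norm_smul, Real.norm_eq_abs, abs_of_pos ht0]; ring
    have : 2 * t * K = L * t * ‖d‖ ^ 2 := by rw [hK]; ring
    linarith
  have h01 := hanti (left_mem_Icc.2 zero_le_one) (right_mem_Icc.2 zero_le_one) zero_le_one
  have h0 : φ 0 = F a := by simp [hφ]
  have h1 : φ 1 = F b - c - K := by simp [hφ, hd]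
  rw [h0, h1] at h01
  linarith

set_option maxHeartbeats 1000000 in
theorem stmt_17 (n : ℕ) (F : EuclideanSpace ℝ (Fin n) → ℝ)
    (G : EuclideanSpace ℝ (Fin n) → EuclideanSpace ℝ (Fin n))
    (hG : ∀ x, HasGradientAt F (G x) x)
    (L : ℝ) (hL : 0 < L)
    (hlip : ∀ x y, ‖G x - G y‖ ≤ L * ‖x - y‖)
    (r : EuclideanSpace ℝ (Fin n) → ℝ) (hconv : ConvexOn ℝ Set.univ r)
    (α : ℝ) (hα : 0 < α) (hαL : α < 1 / L)
    (x g xp δ : EuclideanSpace ℝ (Fin n))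
    (hxp : ∀ u, r xp + (1 / (2 * α)) * ‖xp - (x - α • g)‖ ^ 2 ≤
      r u + (1 / (2 * α)) * ‖u - (x - α • g)‖ ^ 2)
    (hδ : δ = g - G x) :
    F xp + r xp - F x - r x ≤
        -(inner ℝ δ (xp - x) : ℝ) - (1 / α - L / 2) * ‖xp - x‖ ^ 2 ∧
    -(inner ℝ δ (xp - x) : ℝ) - (1 / α - L / 2) * ‖xp - x‖ ^ 2 ≤
        (α / (1 - L * α)) * ‖δ‖ ^ 2 - (1 / 2) * (1 / (2 * α) - L / 2) * ‖xp - x‖ ^ 2 := by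
  have hLα : L * α < 1 := by
    rw [lt_div_iff₀ hL] at hαL; linarith
  set v : EuclideanSpace ℝ (Fin n) := x - α • g with hv
  set c2 : ℝ := 1 / (2 * α) with hc2
  have hc2pos : 0 < c2 := by positivity
  -- strong prox inequality via limit argument
  have hprox : r xp + c2 * ‖xp - v‖ ^ 2 + c2 * ‖x - xp‖ ^ 2 ≤ r x + c2 * ‖x - v‖ ^ 2 := by
    have key : ∀ t ∈ Ioo (0:ℝ) 1,
        c2 * (1 - t) * ‖x - xp‖ ^ 2 ≤ r x + c2 * ‖x - v‖ ^ 2 - r xp - c2 * ‖xp - v‖ ^ 2 := by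
      intro t ht
      obtain ⟨ht0, ht1⟩ := ht
      set u : EuclideanSpace ℝ (Fin n) := xp + t • (x - xp) with hu
      have hconvr : r u ≤ (1 - t) * r xp + t * r x := by
        have := hconv.2 (mem_univ xp) (mem_univ x) (by linarith : (0:ℝ) ≤ 1 - t)
          ht0.le (by ring)
        have hue : (1 - t) • xp + t • x = u := by
          rw [hu]; module
        rw [hue] at this
        simpa [smul_eq_mul] using this
      have hid : ‖u - v‖ ^ 2 =
          (1 - t) * ‖xp - v‖ ^ 2 + t * ‖x - v‖ ^ 2 - t * (1 - t) * ‖x - xp‖ ^ 2 := by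
        have hue : u - v = (xp - v) + t • (x - xp) := by rw [hu]; module
        have hxv : x - v = (xp - v) + (x - xp) := by module
        rw [hue, hxv]
        rw [norm_add_sq_real, norm_add_sq_real, norm_smul, real_inner_smul_right]
        rw [Real.norm_eq_abs, abs_of_pos ht0]
        ring
      have h := hxp u
      rw [hid] at h
      have := hconvr
      nlinarith
    have htend : Tendsto (fun t : ℝ => c2 * (1 - t) * ‖x - xp‖ ^ 2) (𝓝[>] (0:ℝ))
        (𝓝 (c2 * ‖x - xp‖ ^ 2)) := by
      have : Tendsto (fun t : ℝ => c2 * (1 - t) * ‖x - xp‖ ^ 2) (𝓝 (0:ℝ))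
          (𝓝 (c2 * (1 - 0) * ‖x - xp‖ ^ 2)) := by
        apply Continuous.tendsto
        continuity
      simpa using this.mono_left nhdsWithin_le_nhds
    have hub : ∀ᶠ t in 𝓝[>] (0:ℝ),
        c2 * (1 - t) * ‖x - xp‖ ^ 2 ≤ r x + c2 * ‖x - v‖ ^ 2 - r xp - c2 * ‖xp - v‖ ^ 2 := by
      filter_upwards [Ioo_mem_nhdsGT_of_mem (by norm_num : (0:ℝ) ∈ Ico (0:ℝ) 1)] with t ht
      exact key t ht
    have := le_of_tendsto htend hub
    linarith
  -- expand norms in hprox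
  have h1 : ‖xp - v‖ ^ 2 = ‖xp - x‖ ^ 2 + 2 * α * (inner ℝ g (xp - x) : ℝ) + α ^ 2 * ‖g‖ ^ 2 := by
    have : xp - v = (xp - x) + α • g := by rw [hv]; module
    rw [this, norm_add_sq_real, norm_smul, real_inner_smul_right, Real.norm_eq_abs,
      abs_of_pos hα, real_inner_comm]
    ring
  have h2 : ‖x - v‖ ^ 2 = α ^ 2 * ‖g‖ ^ 2 := by
    have : x - v = α • g := by rw [hv]; module
    rw [this, norm_smul, Real.norm_eq_abs, abs_of_pos hα]
    ring
  have h3 : ‖x - xp‖ ^ 2 = ‖xp - x‖ ^ 2 := by rw [norm_sub_rev]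
  have hαne : (2:ℝ) * α ≠ 0 := by positivity
  have hproxkey : r xp + (inner ℝ g (xp - x) : ℝ) + (1 / α) * ‖xp - x‖ ^ 2 ≤ r x := by
    rw [h1, h2, h3] at hprox
    have e1 : c2 * (2 * α) = 1 := by rw [hc2]; field_simp
    have e2 : c2 * 2 = 1 / α := by rw [hc2]; field_simp
    have f1 : c2 * (2 * α * (inner ℝ g (xp - x) : ℝ)) = (inner ℝ g (xp - x) : ℝ) := by
      rw [← mul_assoc, e1, one_mul]
    have f2 : c2 * ‖xp - x‖ ^ 2 * 2 = 1 / α * ‖xp - x‖ ^ 2 := by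
      rw [mul_right_comm, e2]
    nlinarith [hprox, f1, f2]
  -- descent lemma
  have hdesc := descent_lemma F G hG L hlip x xp
  -- part 1
  have hδinner : (inner ℝ δ (xp - x) : ℝ) = (inner ℝ g (xp - x) : ℝ) - (inner ℝ (G x) (xp - x) : ℝ) := by
    rw [hδ, inner_sub_left]
  have part1 : F xp + r xp - F x - r x ≤
      -(inner ℝ δ (xp - x) : ℝ) - (1 / α - L / 2) * ‖xp - x‖ ^ 2 := by
    rw [hδinner]; linarith
  refine ⟨part1, ?_⟩
  -- part 2
  have hCS : -(inner ℝ δ (xp - x) : ℝ) ≤ ‖δ‖ * ‖xp - x‖ := by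
    have := abs_real_inner_le_norm δ (xp - x)
    have := neg_abs_le (inner ℝ δ (xp - x) : ℝ)
    linarith
  set a := ‖δ‖ with ha
  set b := ‖xp - x‖ with hb
  have ha0 : 0 ≤ a := norm_nonneg _
  have hb0 : 0 ≤ b := norm_nonneg _
  have hs : 0 < 1 - L * α := by linarith
  have hkey : a * b ≤ (α / (1 - L * α)) * a ^ 2 + ((3 - L * α) / (4 * α)) * b ^ 2 := by
    have hc : (0:ℝ) < 4 * α * (1 - L * α) := by positivity
    rw [← mul_le_mul_iff_of_pos_left hc]
    have e3 : 4 * α * (1 - L * α) * ((α / (1 - L * α)) * a ^ 2 + ((3 - L * α) / (4 * α)) * b ^ 2)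
        = 4 * α ^ 2 * a ^ 2 + (1 - L * α) * (3 - L * α) * b ^ 2 := by
      have hs' : 1 - L * α ≠ 0 := hs.ne'
      have hinv : (1 - L * α) * (1 - L * α)⁻¹ = 1 := mul_inv_cancel₀ hs'
      have hinv2 : (4 * α) * (4 * α)⁻¹ = 1 := mul_inv_cancel₀ (by positivity)
      linear_combination (4 * α ^ 2 * a ^ 2) * hinv + ((1 - L * α) * (3 - L * α) * b ^ 2) * hinv2
    rw [e3]
    nlinarith [sq_nonneg (2 * α * a - (1 - L * α) * b), mul_nonneg hs.le (sq_nonneg b)]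
  have : -(inner ℝ δ (xp - x) : ℝ) ≤ (α / (1 - L * α)) * a ^ 2 + ((3 - L * α) / (4 * α)) * b ^ 2 :=
    le_trans hCS hkey
  have he : (3 - L * α) / (4 * α) = (1 / α - L / 2) - (1 / 2) * (1 / (2 * α) - L / 2) := by
    field_simp; ring
  rw [he] at this
  linarith
end

section
/- Let f : ℝⁿ → ℝ be convex, differentiable, with L-Lipschitz gradient, let r : ℝⁿ → ℝ be convex, α > 0, and let x⁺ = prox_{αr}(x − α g) for some g ∈ ℝⁿ. Then for every point u: ⟨g, x⁺ − x⟩ + r(x⁺) + (1/(2α))‖x⁺ − x‖² ≤ ⟨g, u − x⟩ + r(u) + (1/(2α))(‖u − x‖² − ‖u − x⁺‖²). -/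
theorem stmt_18 (n : ℕ) (f : EuclideanSpace ℝ (Fin n) → ℝ)
    (Gf : EuclideanSpace ℝ (Fin n) → EuclideanSpace ℝ (Fin n))
    (hf : ConvexOn ℝ Set.univ f)
    (hGf : ∀ x, HasGradientAt f (Gf x) x)
    (L : ℝ) (hL : 0 < L)
    (hlip : ∀ x y, ‖Gf x - Gf y‖ ≤ L * ‖x - y‖)
    (r : EuclideanSpace ℝ (Fin n) → ℝ) (hr : ConvexOn ℝ Set.univ r)
    (α : ℝ) (hα : 0 < α)
    (x g xp : EuclideanSpace ℝ (Fin n))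
    (hxp : ∀ z, r xp + (1 / (2 * α)) * ‖xp - (x - α • g)‖ ^ 2 ≤
      r z + (1 / (2 * α)) * ‖z - (x - α • g)‖ ^ 2) :
    ∀ u, (inner ℝ g (xp - x) : ℝ) + r xp + (1 / (2 * α)) * ‖xp - x‖ ^ 2 ≤
      (inner ℝ g (u - x) : ℝ) + r u +
        (1 / (2 * α)) * (‖u - x‖ ^ 2 - ‖u - xp‖ ^ 2) := by
  intro u
  set v := x - α • g with hv
  have hc : (0:ℝ) < 1 / (2 * α) := by positivity
  set c : ℝ := 1 / (2 * α) with hcdef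
  -- strong convexity three-point inequality
  have key : r xp + c * ‖xp - v‖ ^ 2 + c * ‖u - xp‖ ^ 2 ≤ r u + c * ‖u - v‖ ^ 2 := by
    have hstep : ∀ t : ℝ, 0 < t → t ≤ 1 →
        r xp + c * ‖xp - v‖ ^ 2 + c * ‖u - xp‖ ^ 2 ≤
          r u + c * ‖u - v‖ ^ 2 + c * t * ‖u - xp‖ ^ 2 := by
      intro t ht0 ht1
      have hz := hxp ((1 - t) • xp + t • u)
      have hconv := hr.2 (Set.mem_univ xp) (Set.mem_univ u)
        (show (0:ℝ) ≤ 1 - t by linarith) (le_of_lt ht0) (by ring)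
      simp only [smul_eq_mul] at hconv
      have e1 : (1 - t) • xp + t • u - v = (xp - v) + t • (u - xp) := by module
      have e2 : ‖(xp - v) + t • (u - xp)‖ ^ 2 =
          ‖xp - v‖ ^ 2 + 2 * t * (inner ℝ (xp - v) (u - xp) : ℝ) + t ^ 2 * ‖u - xp‖ ^ 2 := by
        rw [norm_add_sq_real, real_inner_smul_right, norm_smul,
          Real.norm_eq_abs, abs_of_pos ht0]
        ring
      have e3 : ‖u - v‖ ^ 2 = ‖xp - v‖ ^ 2 + 2 * (inner ℝ (xp - v) (u - xp) : ℝ)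
          + ‖u - xp‖ ^ 2 := by
        have h4 : u - v = (xp - v) + (u - xp) := by module
        rw [h4, norm_add_sq_real]
      rw [e1, e2] at hz
      nlinarith [sq_nonneg ‖u - xp‖, mul_pos hc ht0]
    refine le_of_forall_pos_le_add fun ε hε => ?_
    set D := ‖u - xp‖ ^ 2 with hD'
    have hD : 0 ≤ D := sq_nonneg _
    have hden : 0 < c * D + ε := by positivity
    set t := min 1 (ε / (c * D + ε)) with ht'
    have ht0 : 0 < t := lt_min one_pos (by positivity)
    have ht1 : t ≤ 1 := min_le_left _ _
    have h := hstep t ht0 ht1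
    have hbound : c * t * D ≤ ε := by
      have ht2 : t ≤ ε / (c * D + ε) := min_le_right _ _
      have h3 : c * t * D ≤ c * (ε / (c * D + ε)) * D :=
        mul_le_mul_of_nonneg_right (mul_le_mul_of_nonneg_left ht2 hc.le) hD
      have h5 : c * (ε / (c * D + ε)) * D = ε * ((c * D) / (c * D + ε)) := by ring
      have h6 : (c * D) / (c * D + ε) ≤ 1 := by
        rw [div_le_one hden]; linarith
      nlinarith
    linarith
  -- expand the squared norms around x
  have hexp : ∀ z : EuclideanSpace ℝ (Fin n),
      c * ‖z - v‖ ^ 2 = c * ‖z - x‖ ^ 2 + (inner ℝ g (z - x) : ℝ) + c * α ^ 2 * ‖g‖ ^ 2 := by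
    intro z
    have e : z - v = (z - x) + α • g := by rw [hv]; module
    rw [e, norm_add_sq_real, real_inner_smul_right, norm_smul,
      real_inner_comm, Real.norm_eq_abs, abs_of_pos hα, hcdef]
    field_simp
  have h1 := hexp xp
  have h2 := hexp u
  linarith [key, h1, h2]
end
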